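/- Let p ∈ [1,∞) and γ ∈ (p−1, 2p−1). Then every u ∈ W^{2,p}((0,∞), w_γ) has a bounded continuous representative on [0,∞), u(x) → 0 as x → ∞, and sup_{x ≥ 0} |u(x)| ≤ C_{p,γ} ‖u‖_{W^{2,p}((0,∞), w_γ)}. -/

import Mathlib

open MeasureTheory Set

/-- pointwise Young-ish: for s ≥ 0, λ > 0, p ≥ 1 : s ≤ 1/λ + λ^(p-1) * s^p -/
private lemma young_pt {p : ℝ} (hp : 1 ≤ p) {s lam : ℝ} (hs : 0 ≤ s) (hl : 0 < lam) :
    s ≤ 1 / lam + lam ^ (p - 1) * s ^ p := by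
  rcases le_or_gt s (1 / lam) with h | h
  · have h1 : 0 ≤ lam ^ (p - 1) * s ^ p := by positivity
    linarith
  · have hs0 : 0 < s := lt_trans (by positivity) h
    have h1 : 1 ≤ lam * s := by
      rw [div_lt_iff₀ hl] at h; nlinarith
    have h2 : 1 ≤ (lam * s) ^ (p - 1) := Real.one_le_rpow h1 (by linarith)
    have h3 : s ≤ s * (lam * s) ^ (p - 1) := by
      nlinarith [Real.rpow_nonneg (by positivity : (0:ℝ) ≤ lam * s) (p - 1)]
    have h4 : s * (lam * s) ^ (p - 1) = lam ^ (p - 1) * s ^ p := by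
      rw [Real.mul_rpow hl.le hs0.le]
      rw [show s * (lam ^ (p-1) * s ^ (p-1)) = lam ^ (p-1) * (s ^ (1:ℝ) * s ^ (p-1)) by
        rw [Real.rpow_one]; ring]
      rw [← Real.rpow_add hs0]
      ring_nf
    have h5 : 0 ≤ 1 / lam := by positivity
    linarith [h4 ▸ h3]

/-- Hölder-lite on [T, 2T] with weight x^γ. -/
private lemma holder_lite {p γ : ℝ} (hp : 1 ≤ p) (hγ : 0 < γ) {f : ℝ → ℝ} {T : ℝ} (hT : 0 < T)
    (hfm : AEStronglyMeasurable f (volume.restrict (Ioc T (2*T))))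
    (hfi : IntegrableOn (fun x => |f x| ^ p * x ^ γ) (Ioi 0)) :
    ∫ t in T..(2*T), |f t| ≤
      2 * T ^ (1 - (γ+1)/p) * (∫ x in Ioi (0:ℝ), |f x| ^ p * x ^ γ) ^ (1/p) := by
  have hp0 : 0 < p := lt_of_lt_of_le one_pos hp
  set J : ℝ := ∫ x in Ioi (0:ℝ), |f x| ^ p * x ^ γ with hJdef
  have hJnn : 0 ≤ J := by
    apply setIntegral_nonneg measurableSet_Ioi
    intro x hx
    have : (0:ℝ) < x := hx
    positivity
  have hTT : T ≤ 2 * T := by linarith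
  have hsub : Ioc T (2*T) ⊆ Ioi (0:ℝ) := fun x hx => lt_trans hT hx.1
  -- nonnegativity of integrand a.e. on Ioi 0
  have hnn : 0 ≤ᵐ[volume.restrict (Ioi (0:ℝ))] fun x => |f x| ^ p * x ^ γ := by
    rw [Filter.EventuallyLE, ae_restrict_iff' measurableSet_Ioi]
    filter_upwards with x hx
    have : (0:ℝ) < x := hx
    positivity
  have hJpart : ∫ x in Ioc T (2*T), |f x| ^ p * x ^ γ ≤ J :=
    setIntegral_mono_set hfi hnn (HasSubset.Subset.eventuallyLE hsub)
  have hJpartnn : 0 ≤ ∫ x in Ioc T (2*T), |f x| ^ p * x ^ γ := by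
    apply setIntegral_nonneg measurableSet_Ioc
    intro x hx
    have : (0:ℝ) < x := hsub hx
    positivity
  have hwint : IntegrableOn (fun x => |f x| ^ p * x ^ γ) (Ioc T (2*T)) :=
    hfi.mono_set hsub
  have hpt : ∀ t ∈ Ioc T (2*T), |f t| ^ p ≤ T ^ (-γ) * (|f t| ^ p * t ^ γ) := by
    intro t ht
    have hTg : T ^ γ ≤ t ^ γ := Real.rpow_le_rpow hT.le ht.1.le hγ.le
    have hTgpos : (0:ℝ) < T ^ γ := Real.rpow_pos_of_pos hT γ
    have hfp : (0:ℝ) ≤ |f t| ^ p := Real.rpow_nonneg (abs_nonneg _) p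
    rw [Real.rpow_neg hT.le]
    have hone : 1 ≤ (T ^ γ)⁻¹ * t ^ γ := by
      rw [← div_eq_inv_mul, le_div_iff₀ hTgpos]
      simpa using hTg
    calc |f t| ^ p = |f t| ^ p * 1 := by ring
      _ ≤ |f t| ^ p * ((T ^ γ)⁻¹ * t ^ γ) := mul_le_mul_of_nonneg_left hone hfp
      _ = (T ^ γ)⁻¹ * (|f t| ^ p * t ^ γ) := by ring
  have hfint : IntegrableOn (fun t => |f t|) (Ioc T (2*T)) := by
    have hg : IntegrableOn (fun t : ℝ => 1 + T ^ (-γ) * (|f t| ^ p * t ^ γ)) (Ioc T (2*T)) :=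
      (integrableOn_const (C := (1:ℝ)) measure_Ioc_lt_top.ne).add
        (hwint.const_mul (T ^ (-γ)))
    apply Integrable.mono' hg (by simpa [Real.norm_eq_abs] using hfm.norm)
    rw [ae_restrict_iff' measurableSet_Ioc]
    filter_upwards with t ht
    have h1 : |f t| ≤ 1 / 1 + (1:ℝ) ^ (p-1) * |f t| ^ p := young_pt hp (abs_nonneg _) one_pos
    have h2 := hpt t ht
    rw [Real.one_rpow] at h1
    have : ‖|f t|‖ = |f t| := by rw [Real.norm_eq_abs, abs_abs]
    rw [this]
    have hTg : (0:ℝ) ≤ T ^ (-γ) := Real.rpow_nonneg hT.le _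
    norm_num at h1 ⊢
    linarith
  -- main estimate with parameter lam
  have key : ∀ lam : ℝ, 0 < lam →
      ∫ t in T..(2*T), |f t| ≤ T / lam + lam ^ (p-1) * T ^ (-γ) * J := by
    intro lam hl
    rw [intervalIntegral.integral_of_le hTT]
    have step : ∫ t in Ioc T (2*T), |f t| ≤
        ∫ t in Ioc T (2*T), (1/lam + lam ^ (p-1) * T ^ (-γ) * (|f t| ^ p * t ^ γ)) := by
      apply setIntegral_mono_on
      · exact hfint
      · exact (integrableOn_const measure_Ioc_lt_top.ne).add
          (hwint.const_mul _)
      · exact measurableSet_Ioc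
      · intro t ht
        have ht0 : 0 < t := hsub ht
        have h1 : |f t| ≤ 1/lam + lam ^ (p-1) * |f t| ^ p := young_pt hp (abs_nonneg _) hl
        have h2 := hpt t ht
        have hlp : (0:ℝ) ≤ lam ^ (p-1) := Real.rpow_nonneg hl.le _
        nlinarith
    have eval : ∫ t in Ioc T (2*T), (1/lam + lam ^ (p-1) * T ^ (-γ) * (|f t| ^ p * t ^ γ))
        = (2*T - T) * (1/lam) + lam ^ (p-1) * T ^ (-γ) * ∫ t in Ioc T (2*T), |f t| ^ p * t ^ γ := by
      rw [integral_add (integrableOn_const (C := 1/lam) measure_Ioc_lt_top.ne) (hwint.const_mul _),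
        setIntegral_const, MeasureTheory.integral_const_mul, Real.volume_real_Ioc_of_le hTT, smul_eq_mul]
    have last : lam ^ (p-1) * T ^ (-γ) * (∫ t in Ioc T (2*T), |f t| ^ p * t ^ γ)
        ≤ lam ^ (p-1) * T ^ (-γ) * J := by
      apply mul_le_mul_of_nonneg_left hJpart
      positivity
    calc ∫ t in Ioc T (2*T), |f t| ≤ _ := step
      _ = _ := eval
      _ ≤ T / lam + lam ^ (p-1) * T ^ (-γ) * J := by
          rw [show 2*T - T = T by ring]
          rw [mul_one_div]
          linarith
  rcases eq_or_lt_of_le hJnn with hJ0 | hJpos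
  · -- J = 0
    have hz : (0:ℝ) = J := hJ0
    have : ∫ t in T..(2*T), |f t| ≤ 0 := by
      by_contra hcon
      push_neg at hcon
      set I := ∫ t in T..(2*T), |f t| with hI
      have h2 := key (2 * T / I) (by positivity)
      rw [← hz] at h2
      have : T / (2 * T / I) = I / 2 := by field_simp
      rw [this] at h2
      simp only [mul_zero] at h2
      linarith
    have hrhs : (0:ℝ) ≤ 2 * T ^ (1 - (γ+1)/p) * J ^ (1/p) := by positivity
    linarith
  · -- J > 0
    set lam := T ^ ((γ+1)/p) * J ^ (-(1/p)) with hlam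
    have hlampos : 0 < lam := by positivity
    have e1 : T / lam = T ^ (1 - (γ+1)/p) * J ^ (1/p) := by
      rw [eq_comm, eq_div_iff (ne_of_gt hlampos), hlam]
      rw [show T ^ (1 - (γ+1)/p) * J ^ (1/p) * (T ^ ((γ+1)/p) * J ^ (-(1/p)))
        = (T ^ (1 - (γ+1)/p) * T ^ ((γ+1)/p)) * (J ^ (1/p) * J ^ (-(1/p))) by ring]
      rw [← Real.rpow_add hT, ← Real.rpow_add hJpos]
      norm_num
    have e2 : lam ^ (p-1) * T ^ (-γ) * J = T ^ (1 - (γ+1)/p) * J ^ (1/p) := by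
      rw [hlam, Real.mul_rpow (by positivity) (by positivity),
        ← Real.rpow_mul hT.le, ← Real.rpow_mul hJpos.le]
      rw [show T ^ ((γ+1)/p * (p-1)) * J ^ (-(1/p) * (p-1)) * T ^ (-γ) * J
        = (T ^ ((γ+1)/p * (p-1)) * T ^ (-γ)) * (J ^ (-(1/p) * (p-1)) * J ^ (1:ℝ)) by
          rw [Real.rpow_one]; ring]
      rw [← Real.rpow_add hT, ← Real.rpow_add hJpos]
      congr 1
      · congr 1
        field_simp
        ring
      · congr 1
        field_simp
        ring
    calc ∫ t in T..(2*T), |f t| ≤ T / lam + lam ^ (p-1) * T ^ (-γ) * J := key lam hlampos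
      _ = 2 * T ^ (1 - (γ+1)/p) * J ^ (1/p) := by rw [e1, e2]; ring

/-- a point with value at most the average -/
private lemma meanpt {f : ℝ → ℝ} {a b : ℝ} (hab : a < b) (hf : ContinuousOn f (Icc a b)) :
    ∃ x₀ ∈ Icc a b, |f x₀| * (b - a) ≤ ∫ t in a..b, |f t| := by
  obtain ⟨x₀, hx₀, hmin⟩ := isCompact_Icc.exists_isMinOn (nonempty_Icc.2 hab.le) hf.abs
  refine ⟨x₀, hx₀, ?_⟩
  have hfi : IntervalIntegrable (fun t => |f t|) volume a b := by
    apply ContinuousOn.intervalIntegrable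
    rw [uIcc_of_le hab.le]; exact hf.abs
  calc |f x₀| * (b - a) = ∫ _ in a..b, |f x₀| := by
        rw [intervalIntegral.integral_const, smul_eq_mul]; ring
    _ ≤ ∫ t in a..b, |f t| := by
        apply intervalIntegral.integral_mono_on hab.le intervalIntegrable_const hfi
        intro t ht
        exact hmin ht

/-- sup bound from average + derivative -/
private lemma sup_bound {f f' : ℝ → ℝ} {a b : ℝ} (h0 : 0 < a) (hab : a < b)
    (hf : ∀ x ∈ Ioi (0:ℝ), HasDerivAt f (f' x) x)
    (hf'c : ContinuousOn f' (Icc a b)) :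
    ∀ x ∈ Icc a b, |f x| * (b - a) ≤ (∫ t in a..b, |f t|) + (b - a) * ∫ t in a..b, |f' t| := by
  have hIcc : Icc a b ⊆ Ioi (0:ℝ) := fun t ht => lt_of_lt_of_le h0 ht.1
  have hfc : ContinuousOn f (Icc a b) := fun t ht =>
    ((hf t (hIcc ht)).continuousAt).continuousWithinAt
  obtain ⟨x₀, hx₀, hm⟩ := meanpt hab hfc
  intro x hx
  have huIcc : uIcc x₀ x ⊆ Icc a b := uIcc_subset_Icc hx₀ hx
  have hftc : ∫ t in x₀..x, f' t = f x - f x₀ := by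
    apply intervalIntegral.integral_eq_sub_of_hasDerivAt
    · intro t ht; exact hf t (hIcc (huIcc ht))
    · apply ContinuousOn.intervalIntegrable (hf'c.mono huIcc)
  have habs : |f x - f x₀| ≤ ∫ t in a..b, |f' t| := by
    rw [← hftc]
    have hnn : 0 ≤ᵐ[volume.restrict (Ioc a b)] fun t => |f' t| := by
      filter_upwards with t using abs_nonneg _
    have hfi' : IntervalIntegrable (fun t => |f' t|) volume a b := by
      apply ContinuousOn.intervalIntegrable
      rw [uIcc_of_le hab.le]; exact hf'c.abs
    rcases le_total x₀ x with h | h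
    · calc |∫ t in x₀..x, f' t| ≤ ∫ t in x₀..x, |f' t| := by
            simpa [Real.norm_eq_abs] using intervalIntegral.norm_integral_le_integral_norm
              (f := f') (a := x₀) (b := x) h
        _ ≤ ∫ t in a..b, |f' t| :=
            intervalIntegral.integral_mono_interval hx₀.1 h hx.2 hnn hfi'
    · rw [intervalIntegral.integral_symm, abs_neg]
      calc |∫ t in x..x₀, f' t| ≤ ∫ t in x..x₀, |f' t| := by
            simpa [Real.norm_eq_abs] using intervalIntegral.norm_integral_le_integral_norm
              (f := f') (a := x) (b := x₀) h
        _ ≤ ∫ t in a..b, |f' t| :=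
            intervalIntegral.integral_mono_interval hx.1 h hx₀.2 hnn hfi'
  have h1 : |f x| ≤ |f x₀| + ∫ t in a..b, |f' t| := by
    have := abs_sub_abs_le_abs_sub (f x) (f x₀)
    linarith
  have hba : 0 < b - a := by linarith
  calc |f x| * (b - a) ≤ (|f x₀| + ∫ t in a..b, |f' t|) * (b - a) :=
        mul_le_mul_of_nonneg_right h1 hba.le
    _ = |f x₀| * (b - a) + (b - a) * ∫ t in a..b, |f' t| := by ring
    _ ≤ _ := by linarith
set_option maxHeartbeats 2000000 in
theorem stmt_3 (p γ : ℝ) (hp : 1 ≤ p) (h1 : p - 1 < γ) (h2 : γ < 2 * p - 1) :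
    ∃ C : ℝ, 0 < C ∧ ∀ u u' u'' : ℝ → ℝ,
      (∀ x ∈ Ioi (0:ℝ), HasDerivAt u (u' x) x) →
      (∀ x ∈ Ioi (0:ℝ), HasDerivAt u' (u'' x) x) →
      IntegrableOn (fun x => |u x| ^ p * x ^ γ) (Ioi 0) →
      IntegrableOn (fun x => |u' x| ^ p * x ^ γ) (Ioi 0) →
      IntegrableOn (fun x => |u'' x| ^ p * x ^ γ) (Ioi 0) →
      ∃ v : ℝ → ℝ, ContinuousOn v (Ici 0) ∧ (∀ x ∈ Ioi (0:ℝ), v x = u x) ∧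
        Filter.Tendsto v Filter.atTop (nhds 0) ∧
        ∀ x ∈ Ici (0:ℝ), |v x| ≤ C *
          ((∫ x in Ioi (0:ℝ), |u x| ^ p * x ^ γ) ^ (1 / p) +
           (∫ x in Ioi (0:ℝ), |u' x| ^ p * x ^ γ) ^ (1 / p) +
           (∫ x in Ioi (0:ℝ), |u'' x| ^ p * x ^ γ) ^ (1 / p)) := by
  have hp0 : 0 < p := lt_of_lt_of_le one_pos hp
  have hγpos : 0 < γ := by linarith
  obtain ⟨q, hqdef⟩ : ∃ q : ℝ, q = (γ + 1) / p := ⟨_, rfl⟩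
  have hq1 : 1 < q := by rw [hqdef]; exact (one_lt_div hp0).2 (by linarith)
  have hq2 : q < 2 := by rw [hqdef, div_lt_iff₀ hp0]; linarith
  have h2pos : (0:ℝ) < 2 := two_pos
  have hspos : (0:ℝ) < 2 ^ (1 - q) := Real.rpow_pos_of_pos h2pos _
  have hslt : (2:ℝ) ^ (1 - q) < 1 :=
    Real.rpow_lt_one_of_one_lt_of_neg one_lt_two (by linarith)
  have h2qpos : (0:ℝ) < 2 ^ q := Real.rpow_pos_of_pos h2pos _
  obtain ⟨F, hFdef⟩ : ∃ F : ℝ, F = 2 / (1 - 2 ^ (1 - q)) + 2 ^ q := ⟨_, rfl⟩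
  have hFpos : 0 < F := by
    have hd : (0:ℝ) < 1 - 2 ^ (1 - q) := by linarith
    rw [hFdef]
    have := div_pos h2pos hd
    linarith
  have hmul2 : (2:ℝ) ^ q * 2 ^ (1 - q) = 2 := by
    rw [← Real.rpow_add h2pos]; norm_num
  have hF1 : 2 ≤ F * 2 ^ (1 - q) := by
    have h0 : (0:ℝ) ≤ 2 / (1 - 2 ^ (1 - q)) := by
      have : (0:ℝ) < 1 - 2 ^ (1 - q) := by linarith
      positivity
    have e : F * 2 ^ (1 - q) = (2 / (1 - 2 ^ (1 - q))) * 2 ^ (1 - q) + 2 ^ q * 2 ^ (1 - q) := by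
      rw [hFdef]; ring
    linarith [mul_nonneg h0 hspos.le, e, hmul2]
  have hFstep : 2 + F * 2 ^ (1 - q) ≤ F := by
    have hd : (0:ℝ) < 1 - 2 ^ (1 - q) := by linarith
    have hFs : F * (1 - 2 ^ (1 - q)) = 2 + 2 ^ q * (1 - 2 ^ (1 - q)) := by
      rw [hFdef, add_mul, div_mul_cancel₀ _ (ne_of_gt hd)]
    nlinarith [mul_nonneg h2qpos.le hd.le]
  have h2mq : (0:ℝ) < 2 - q := by linarith
  obtain ⟨D, hDdef⟩ : ∃ D : ℝ, D = F / (2 - q) := ⟨_, rfl⟩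
  have hDpos : 0 < D := by rw [hDdef]; exact div_pos hFpos h2mq
  refine ⟨9 + 2 * D, by linarith, ?_⟩
  intro u u' u'' hu hu' hi0 hi1 hi2
  obtain ⟨M0, hM0def⟩ : ∃ M : ℝ, M = (∫ x in Ioi (0:ℝ), |u x| ^ p * x ^ γ) ^ (1 / p) := ⟨_, rfl⟩
  obtain ⟨M1, hM1def⟩ : ∃ M : ℝ, M = (∫ x in Ioi (0:ℝ), |u' x| ^ p * x ^ γ) ^ (1 / p) := ⟨_, rfl⟩
  obtain ⟨M2, hM2def⟩ : ∃ M : ℝ, M = (∫ x in Ioi (0:ℝ), |u'' x| ^ p * x ^ γ) ^ (1 / p) := ⟨_, rfl⟩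
  rw [← hM0def, ← hM1def, ← hM2def]
  have hJ0 : 0 ≤ ∫ x in Ioi (0:ℝ), |u x| ^ p * x ^ γ :=
    setIntegral_nonneg measurableSet_Ioi fun x hx => by
      have : (0:ℝ) < x := hx; positivity
  have hJ1 : 0 ≤ ∫ x in Ioi (0:ℝ), |u' x| ^ p * x ^ γ :=
    setIntegral_nonneg measurableSet_Ioi fun x hx => by
      have : (0:ℝ) < x := hx; positivity
  have hJ2 : 0 ≤ ∫ x in Ioi (0:ℝ), |u'' x| ^ p * x ^ γ :=
    setIntegral_nonneg measurableSet_Ioi fun x hx => by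
      have : (0:ℝ) < x := hx; positivity
  have hM0 : 0 ≤ M0 := hM0def ▸ Real.rpow_nonneg hJ0 _
  have hM1 : 0 ≤ M1 := hM1def ▸ Real.rpow_nonneg hJ1 _
  have hM2 : 0 ≤ M2 := hM2def ▸ Real.rpow_nonneg hJ2 _
  have hcu : ContinuousOn u (Ioi 0) := fun x hx => (hu x hx).continuousAt.continuousWithinAt
  have hcu' : ContinuousOn u' (Ioi 0) := fun x hx => (hu' x hx).continuousAt.continuousWithinAt
  have hIccsub : ∀ {a b : ℝ}, 0 < a → Icc a b ⊆ Ioi (0:ℝ) :=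
    fun ha t ht => lt_of_lt_of_le ha ht.1
  have hIocsub : ∀ {a b : ℝ}, 0 < a → Ioc a b ⊆ Ioi (0:ℝ) :=
    fun ha t ht => lt_trans ha ht.1
  have hmeas'' : AEStronglyMeasurable u'' (volume.restrict (Ioi 0)) := by
    have h1 : (deriv u') =ᵐ[volume.restrict (Ioi (0:ℝ))] u'' := by
      rw [Filter.EventuallyEq, ae_restrict_iff' measurableSet_Ioi]
      filter_upwards with x hx
      exact (hu' x hx).deriv
    exact ((measurable_deriv u').aestronglyMeasurable).congr h1
  -- integrability of u'' on compact subintervals of (0,∞)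
  have hintOn'' : ∀ a b : ℝ, 0 < a → IntegrableOn u'' (Ioc a b) := by
    intro a b ha
    have hwint : IntegrableOn (fun x => |u'' x| ^ p * x ^ γ) (Ioc a b) :=
      hi2.mono_set (hIocsub ha)
    have hg : IntegrableOn (fun t : ℝ => 1 + a ^ (-γ) * (|u'' t| ^ p * t ^ γ)) (Ioc a b) :=
      (integrableOn_const (C := (1:ℝ)) measure_Ioc_lt_top.ne).add
        (hwint.const_mul (a ^ (-γ)))
    apply Integrable.mono' hg
      (hmeas''.mono_measure (Measure.restrict_mono (hIocsub ha) le_rfl))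
    rw [ae_restrict_iff' measurableSet_Ioc]
    filter_upwards with t ht
    have ht0 : 0 < t := lt_trans ha ht.1
    have h1 : |u'' t| ≤ 1 / 1 + (1:ℝ) ^ (p-1) * |u'' t| ^ p := young_pt hp (abs_nonneg _) one_pos
    rw [Real.one_rpow] at h1
    have h2 : |u'' t| ^ p ≤ a ^ (-γ) * (|u'' t| ^ p * t ^ γ) := by
      have hTg : a ^ γ ≤ t ^ γ := Real.rpow_le_rpow ha.le ht.1.le hγpos.le
      have hTgpos : (0:ℝ) < a ^ γ := Real.rpow_pos_of_pos ha γ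
      have hfp : (0:ℝ) ≤ |u'' t| ^ p := Real.rpow_nonneg (abs_nonneg _) p
      rw [Real.rpow_neg ha.le]
      have hone : 1 ≤ (a ^ γ)⁻¹ * t ^ γ := by
        rw [← div_eq_inv_mul, le_div_iff₀ hTgpos]
        simpa using hTg
      calc |u'' t| ^ p = |u'' t| ^ p * 1 := by ring
        _ ≤ |u'' t| ^ p * ((a ^ γ)⁻¹ * t ^ γ) := mul_le_mul_of_nonneg_left hone hfp
        _ = (a ^ γ)⁻¹ * (|u'' t| ^ p * t ^ γ) := by ring
    rw [Real.norm_eq_abs]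
    norm_num at h1 ⊢
    linarith
  -- Hölder-lite specializations
  have HLu : ∀ T : ℝ, 0 < T → ∫ t in T..(2*T), |u t| ≤ 2 * T ^ (1 - q) * M0 := by
    intro T hT
    have h := holder_lite hp hγpos hT
      (((hcu.mono (hIocsub hT)).aestronglyMeasurable measurableSet_Ioc)) hi0
    rw [← hqdef, ← hM0def] at h
    exact h
  have HLu' : ∀ T : ℝ, 0 < T → ∫ t in T..(2*T), |u' t| ≤ 2 * T ^ (1 - q) * M1 := by
    intro T hT
    have h := holder_lite hp hγpos hT
      (((hcu'.mono (hIocsub hT)).aestronglyMeasurable measurableSet_Ioc)) hi1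
    rw [← hqdef, ← hM1def] at h
    exact h
  have HLu'' : ∀ T : ℝ, 0 < T → ∫ t in T..(2*T), |u'' t| ≤ 2 * T ^ (1 - q) * M2 := by
    intro T hT
    have h := holder_lite hp hγpos hT
      (hmeas''.mono_measure (Measure.restrict_mono (hIocsub hT) le_rfl)) hi2
    rw [← hqdef, ← hM2def] at h
    exact h
  -- interval integrability of |u''|, |u'| on compacts of (0,∞)
  have iint'' : ∀ a b : ℝ, 0 < a → a ≤ b → IntervalIntegrable (fun t => |u'' t|) volume a b := by
    intro a b ha hab
    rw [intervalIntegrable_iff_integrableOn_Ioc_of_le hab]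
    exact (hintOn'' a b ha).abs
  have iintc'' : ∀ a b : ℝ, 0 < a → a ≤ b → IntervalIntegrable u'' volume a b := by
    intro a b ha hab
    rw [intervalIntegrable_iff_integrableOn_Ioc_of_le hab]
    exact hintOn'' a b ha
  have iint' : ∀ a b : ℝ, 0 < a → a ≤ b → IntervalIntegrable (fun t => |u' t|) volume a b := by
    intro a b ha hab
    apply ContinuousOn.intervalIntegrable
    rw [uIcc_of_le hab]
    exact (hcu'.mono (hIccsub ha)).abs
  -- key pointwise bound at 2T
  have key1 : ∀ T : ℝ, 0 < T → |u (2*T)| ≤ 2 * T ^ (-q) * M0 + 2 * T ^ (1-q) * M1 := by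
    intro T hT
    have hab : T < 2*T := by linarith
    have hsb := sup_bound hT hab hu (hcu'.mono (hIccsub hT)) (2*T)
      ⟨by linarith, le_refl _⟩
    have hTsplit : T ^ (1 - q) = T * T ^ (-q) := by
      rw [show (1:ℝ) - q = -q + 1 by ring, Real.rpow_add hT, Real.rpow_one]; ring
    have h0 := HLu T hT
    have h1 := HLu' T hT
    have hgoal : |u (2*T)| * T ≤ (2 * T ^ (-q) * M0 + 2 * T ^ (1-q) * M1) * T := by
      have e : 2*T - T = T := by ring
      rw [e] at hsb
      calc |u (2*T)| * T ≤ (∫ t in T..(2*T), |u t|) + T * ∫ t in T..(2*T), |u' t| := hsb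
        _ ≤ 2 * T ^ (1-q) * M0 + T * (2 * T ^ (1-q) * M1) := by
            have := mul_le_mul_of_nonneg_left h1 hT.le
            linarith
        _ = (2 * T ^ (-q) * M0 + 2 * T ^ (1-q) * M1) * T := by
            rw [hTsplit]; ring
    exact (mul_le_mul_iff_left₀ hT).1 hgoal
  -- rpow comparisons
  have hpow4 : ∀ T : ℝ, 1/2 ≤ T → T ^ (-q) ≤ 4 := by
    intro T hT
    have hThalf : (0:ℝ) < 1/2 := by norm_num
    have s1 : T ^ (-q) ≤ ((1:ℝ)/2) ^ (-q) :=
      Real.rpow_le_rpow_of_nonpos hThalf hT (by linarith)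
    have s2 : ((1:ℝ)/2) ^ (-q) = 2 ^ q := by
      rw [one_div, Real.inv_rpow h2pos.le, Real.rpow_neg h2pos.le, inv_inv]
    have s3 : (2:ℝ) ^ q ≤ 2 ^ (2:ℝ) := Real.rpow_le_rpow_of_exponent_le one_le_two hq2.le
    have s4 : (2:ℝ) ^ (2:ℝ) = 4 := by
      rw [show (2:ℝ) = ((2:ℕ):ℝ) by norm_num, Real.rpow_natCast]; norm_num
    calc T ^ (-q) ≤ 2 ^ q := by rw [← s2]; exact s1
      _ ≤ 4 := by rw [← s4]; exact s3
  have hpow2 : ∀ T : ℝ, 1/2 ≤ T → T ^ (1-q) ≤ 2 := by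
    intro T hT
    have hThalf : (0:ℝ) < 1/2 := by norm_num
    have s1 : T ^ (1-q) ≤ ((1:ℝ)/2) ^ (1-q) :=
      Real.rpow_le_rpow_of_nonpos hThalf hT (by linarith)
    have s2 : ((1:ℝ)/2) ^ (1-q) = 2 ^ (q-1) := by
      rw [one_div, Real.inv_rpow h2pos.le, ← Real.rpow_neg h2pos.le]
      congr 1; ring
    have s3 : (2:ℝ) ^ (q-1) ≤ 2 ^ (1:ℝ) :=
      Real.rpow_le_rpow_of_exponent_le one_le_two (by linarith)
    have s4 : (2:ℝ) ^ (1:ℝ) = 2 := Real.rpow_one 2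
    calc T ^ (1-q) ≤ 2 ^ (q-1) := by rw [← s2]; exact s1
      _ ≤ 2 := by simpa using s3
  have large : ∀ x : ℝ, 1 ≤ x → |u x| ≤ 8 * M0 + 4 * M1 := by
    intro x hx
    have hT : 0 < x/2 := by linarith
    have hk := key1 (x/2) hT
    rw [show 2*(x/2) = x by ring] at hk
    have b1 : (x/2) ^ (-q) ≤ 4 := hpow4 _ (by linarith)
    have b2 : (x/2) ^ (1-q) ≤ 2 := hpow2 _ (by linarith)
    have c1 := mul_le_mul_of_nonneg_left b1 hM0
    have c2 := mul_le_mul_of_nonneg_left b2 hM1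
    nlinarith
  -- good point for u' in [1,2]
  have hint12u' : ∫ t in (1:ℝ)..2, |u' t| ≤ 2 * M1 := by
    have h := HLu' 1 one_pos
    rw [show (2:ℝ)*1 = 2 by norm_num, Real.one_rpow] at h
    linarith
  have hint12u'' : ∫ t in (1:ℝ)..2, |u'' t| ≤ 2 * M2 := by
    have h := HLu'' 1 one_pos
    rw [show (2:ℝ)*1 = 2 by norm_num, Real.one_rpow] at h
    linarith
  obtain ⟨y₀, hy₀mem, hy₀avg⟩ := meanpt (by norm_num : (1:ℝ) < 2)
    (hcu'.mono (hIccsub one_pos))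
  have hy₀ : |u' y₀| ≤ 2 * M1 := by
    have : |u' y₀| * (2 - 1) = |u' y₀| := by ring
    rw [this] at hy₀avg
    linarith
  -- base comparison: for 0 < x ≤ 2, 2 ≤ F * x^(1-q)
  have hbasecmp : ∀ x : ℝ, 0 < x → x ≤ 2 → 2 ≤ F * x ^ (1-q) := by
    intro x hx0 hx2
    have h1 : (2:ℝ) ^ (1-q) ≤ x ^ (1-q) :=
      Real.rpow_le_rpow_of_nonpos hx0 hx2 (by linarith)
    linarith [mul_le_mul_of_nonneg_left h1 hFpos.le, hF1]
  have hnnIoc : ∀ a b : ℝ, 0 ≤ᵐ[volume.restrict (Ioc a b)] fun t => |u'' t| := by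
    intro a b; filter_upwards with t using abs_nonneg _
  -- P4: dyadic induction for ∫_x^2 |u''|
  have P4 : ∀ n : ℕ, ∀ x : ℝ, ((1:ℝ)/2)^n ≤ x → x ≤ 2 →
      ∫ t in x..2, |u'' t| ≤ F * M2 * x ^ (1-q) := by
    intro n
    induction n with
    | zero =>
      intro x hxn hx2
      simp only [pow_zero] at hxn
      have hx0 : (0:ℝ) < x := by linarith
      have hmono : ∫ t in x..2, |u'' t| ≤ ∫ t in (1:ℝ)..2, |u'' t| :=
        intervalIntegral.integral_mono_interval hxn hx2 (le_refl 2) (hnnIoc 1 2)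
          (iint'' 1 2 one_pos (by norm_num))
      have hc := mul_le_mul_of_nonneg_left (hbasecmp x hx0 hx2) hM2
      nlinarith [hmono, hint12u'', hc]
    | succ n ih =>
      intro x hxn hx2
      rcases le_or_gt (((1:ℝ)/2)^n) x with h | h
      · exact ih x h hx2
      · have hx0 : (0:ℝ) < x := lt_of_lt_of_le (by positivity) hxn
        have hpow1 : ((1:ℝ)/2)^n ≤ 1 := pow_le_one₀ (by norm_num) (by norm_num)
        have h2x2 : 2*x ≤ 2 := by nlinarith
        have h2xn : ((1:ℝ)/2)^n ≤ 2*x := by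
          have : ((1:ℝ)/2)^(n+1) = ((1:ℝ)/2)^n * (1/2) := pow_succ _ _
          rw [this] at hxn
          linarith
        have hsplit := intervalIntegral.integral_add_adjacent_intervals
          (iint'' x (2*x) hx0 (by linarith)) (iint'' (2*x) 2 (by linarith) h2x2)
        have b1 := HLu'' x hx0
        have b2 := ih (2*x) h2xn h2x2
        have hmul : (2*x) ^ (1-q) = 2 ^ (1-q) * x ^ (1-q) :=
          Real.mul_rpow h2pos.le hx0.le
        rw [hmul] at b2
        have hxq : (0:ℝ) ≤ x ^ (1-q) := Real.rpow_nonneg hx0.le _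
        rw [← hsplit]
        have hc : (2 + F * 2 ^ (1-q)) * (M2 * x ^ (1-q)) ≤ F * (M2 * x ^ (1-q)) :=
          mul_le_mul_of_nonneg_right hFstep (mul_nonneg hM2 hxq)
        nlinarith [b1, b2, hc]
  -- P5: pointwise bound on u' near 0
  have P5 : ∀ x : ℝ, 0 < x → x ≤ 2 → |u' x| ≤ 2 * M1 + F * M2 * x ^ (1-q) := by
    intro x hx0 hx2
    have hy₀pos : (0:ℝ) < y₀ := lt_of_lt_of_le one_pos hy₀mem.1
    have hftc : ∫ t in x..y₀, u'' t = u' y₀ - u' x := by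
      apply intervalIntegral.integral_eq_sub_of_hasDerivAt
      · intro t ht
        apply hu'
        have h1 : min x y₀ ≤ t := ht.1
        have h2 : 0 < min x y₀ := lt_min hx0 hy₀pos
        exact lt_of_lt_of_le h2 h1
      · rcases le_total x y₀ with h | h
        · exact iintc'' x y₀ hx0 h
        · exact (iintc'' y₀ x hy₀pos h).symm
    have habs : |u' x| ≤ |u' y₀| + |∫ t in x..y₀, u'' t| := by
      have := abs_sub_abs_le_abs_sub (u' x) (u' y₀)
      have h2 : |u' x - u' y₀| = |∫ t in x..y₀, u'' t| := by
        rw [hftc, abs_sub_comm]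
      linarith [abs_sub_abs_le_abs_sub (u' x) (u' y₀), abs_nonneg (u' x - u' y₀)]
    have hIbound : |∫ t in x..y₀, u'' t| ≤ F * M2 * x ^ (1-q) := by
      rcases le_total x y₀ with hxy | hxy
      · obtain ⟨n, hn⟩ := exists_pow_lt_of_lt_one hx0 (by norm_num : (1:ℝ)/2 < 1)
        have hP := P4 n x hn.le hx2
        calc |∫ t in x..y₀, u'' t| ≤ ∫ t in x..y₀, |u'' t| := by
              simpa [Real.norm_eq_abs] using intervalIntegral.norm_integral_le_integral_norm
                (f := u'') (a := x) (b := y₀) hxy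
          _ ≤ ∫ t in x..2, |u'' t| :=
              intervalIntegral.integral_mono_interval (le_refl x) hxy hy₀mem.2
                (hnnIoc x 2) (iint'' x 2 hx0 (by linarith))
          _ ≤ F * M2 * x ^ (1-q) := hP
      · have hcmp := hbasecmp x hx0 hx2
        calc |∫ t in x..y₀, u'' t| = |∫ t in y₀..x, u'' t| := by
              rw [intervalIntegral.integral_symm, abs_neg]
          _ ≤ ∫ t in y₀..x, |u'' t| := by
              simpa [Real.norm_eq_abs] using intervalIntegral.norm_integral_le_integral_norm
                (f := u'') (a := y₀) (b := x) hxy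
          _ ≤ ∫ t in (1:ℝ)..2, |u'' t| :=
              intervalIntegral.integral_mono_interval hy₀mem.1 hxy hx2
                (hnnIoc 1 2) (iint'' 1 2 one_pos (by norm_num))
          _ ≤ 2 * M2 := hint12u''
          _ ≤ F * M2 * x ^ (1-q) := by
              have := mul_le_mul_of_nonneg_left hcmp hM2
              nlinarith
    linarith
  have hr : (-1:ℝ) < 1 - q := by linarith
  -- the dominating function for u' near 0
  have hgiint : IntervalIntegrable (fun t : ℝ => 2*M1 + (F*M2) * t ^ (1-q)) volume 0 1 :=
    intervalIntegrable_const.add ((intervalIntegral.intervalIntegrable_rpow' hr).const_mul (F*M2))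
  have hgint : IntegrableOn (fun t : ℝ => 2*M1 + (F*M2) * t ^ (1-q)) (Ioc 0 1) :=
    (intervalIntegrable_iff_integrableOn_Ioc_of_le zero_le_one).1 hgiint
  have hu'meas01 : AEStronglyMeasurable u' (volume.restrict (Ioc (0:ℝ) 1)) :=
    (hcu'.mono (fun t ht => ht.1)).aestronglyMeasurable measurableSet_Ioc
  have hu'int01 : IntegrableOn u' (Ioc (0:ℝ) 1) := by
    apply Integrable.mono' hgint hu'meas01
    rw [ae_restrict_iff' measurableSet_Ioc]
    filter_upwards with t ht
    rw [Real.norm_eq_abs]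
    have := P5 t ht.1 (le_trans ht.2 one_le_two)
    linarith
  have intgval : ∀ x : ℝ, 0 ≤ x → x ≤ 1 →
      ∫ t in Ioc (0:ℝ) x, (2*M1 + (F*M2) * t ^ (1-q)) =
        2*M1*x + (F*M2) * (x ^ (2-q) / (2-q)) := by
    intro x hx0 hx1
    rw [← intervalIntegral.integral_of_le hx0]
    rw [intervalIntegral.integral_add intervalIntegrable_const
      ((intervalIntegral.intervalIntegrable_rpow' hr).const_mul (F*M2)),
      intervalIntegral.integral_const, intervalIntegral.integral_const_mul,
      integral_rpow (Or.inl hr)]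
    rw [show (1:ℝ) - q + 1 = 2 - q by ring, Real.zero_rpow (by linarith : (2:ℝ) - q ≠ 0)]
    rw [smul_eq_mul]
    ring
  have bnd0x : ∀ x : ℝ, 0 < x → x ≤ 1 →
      |∫ t in Ioc (0:ℝ) x, u' t| ≤ 2*M1*x + (F*M2) * (x ^ (2-q) / (2-q)) := by
    intro x hx0 hx1
    have hsub01 : Ioc (0:ℝ) x ⊆ Ioc (0:ℝ) 1 := Ioc_subset_Ioc le_rfl hx1
    calc |∫ t in Ioc (0:ℝ) x, u' t| ≤ ∫ t in Ioc (0:ℝ) x, |u' t| := by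
          simpa [Real.norm_eq_abs] using
            norm_integral_le_integral_norm (μ := volume.restrict (Ioc (0:ℝ) x)) u'
      _ ≤ ∫ t in Ioc (0:ℝ) x, (2*M1 + (F*M2) * t ^ (1-q)) := by
          apply setIntegral_mono_on
          · exact (hu'int01.mono_set hsub01).abs
          · exact hgint.mono_set hsub01
          · exact measurableSet_Ioc
          · intro t ht
            exact P5 t ht.1 (by linarith [ht.2] : t ≤ 2)
      _ = 2*M1*x + (F*M2) * (x ^ (2-q) / (2-q)) := intgval x hx0.le hx1
  have ftc01 : ∀ x : ℝ, 0 < x → x ≤ 1 → u 1 - u x = ∫ t in Ioc x 1, u' t := by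
    intro x hx0 hx1
    have h := intervalIntegral.integral_eq_sub_of_hasDerivAt (f := u) (f' := u')
      (a := x) (b := 1) ?_ ?_
    · rw [← intervalIntegral.integral_of_le hx1]
      exact h.symm
    · intro t ht
      rw [uIcc_of_le hx1] at ht
      exact hu t (lt_of_lt_of_le hx0 ht.1)
    · apply ContinuousOn.intervalIntegrable
      rw [uIcc_of_le hx1]
      exact hcu'.mono (hIccsub hx0)
  have split01 : ∀ x : ℝ, 0 < x → x ≤ 1 →
      (∫ t in Ioc (0:ℝ) 1, u' t) = (∫ t in Ioc (0:ℝ) x, u' t) + ∫ t in Ioc x 1, u' t := by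
    intro x hx0 hx1
    rw [← setIntegral_union (Ioc_disjoint_Ioc_of_le le_rfl) measurableSet_Ioc
      (hu'int01.mono_set (Ioc_subset_Ioc le_rfl hx1))
      (hu'int01.mono_set (Ioc_subset_Ioc hx0.le le_rfl)),
      Ioc_union_Ioc_eq_Ioc hx0.le hx1]
  obtain ⟨L0, hL0def⟩ : ∃ L : ℝ, L = u 1 - ∫ t in Ioc (0:ℝ) 1, u' t := ⟨_, rfl⟩
  have rep : ∀ x : ℝ, 0 < x → x ≤ 1 → u x - L0 = ∫ t in Ioc (0:ℝ) x, u' t := by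
    intro x hx0 hx1
    have hh1 := ftc01 x hx0 hx1
    have hh2 := split01 x hx0 hx1
    rw [hL0def]
    linarith
  have smallb : ∀ x : ℝ, 0 < x → x ≤ 1 →
      |u x - L0| ≤ 2*M1*x + (F*M2) * (x ^ (2-q) / (2-q)) := by
    intro x hx0 hx1
    rw [rep x hx0 hx1]
    exact bnd0x x hx0 hx1
  have hL0b : |L0| ≤ 8*M0 + 6*M1 + (F*M2) * (1 / (2-q)) := by
    have h1 := large 1 le_rfl
    have h2 := bnd0x 1 one_pos le_rfl
    rw [Real.one_rpow] at h2
    have h3 : |L0| ≤ |u 1| + |∫ t in Ioc (0:ℝ) 1, u' t| := by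
      rw [hL0def]
      exact (abs_sub _ _)
    linarith
  obtain ⟨v, hvdef⟩ : ∃ v : ℝ → ℝ, v = fun x => if 0 < x then u x else L0 := ⟨_, rfl⟩
  have hvpos : ∀ x : ℝ, 0 < x → v x = u x := by
    intro x hx; rw [hvdef]; simp only [if_pos hx]
  have hv0 : v 0 = L0 := by rw [hvdef]; simp only [lt_irrefl, if_false]
  refine ⟨v, ?_, fun x hx => hvpos x hx, ?_, ?_⟩
  · -- continuity on Ici 0
    intro x hx
    rcases eq_or_lt_of_le (Set.mem_Ici.mp hx) with heq | hx0
    · -- x = 0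
      subst heq
      have hDnn : (0:ℝ) ≤ F*M2 := mul_nonneg hFpos.le hM2
      have hsq : Filter.Tendsto (fun y => v y - L0) (nhdsWithin 0 (Ici (0:ℝ))) (nhds 0) := by
        apply squeeze_zero_norm'
          (a := fun y : ℝ => 2*M1*y + (F*M2) * (y ^ (2-q) / (2-q)))
        · have h1 : ∀ᶠ y in nhdsWithin 0 (Ici (0:ℝ)), y < 1 :=
            Filter.Eventually.filter_mono nhdsWithin_le_nhds
              (Iio_mem_nhds (show (0:ℝ) < 1 by norm_num))
          have h2 : ∀ᶠ y in nhdsWithin 0 (Ici (0:ℝ)), y ∈ Ici (0:ℝ) :=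
            eventually_mem_nhdsWithin
          filter_upwards [h1, h2] with y hy1 hy2
          rcases eq_or_lt_of_le (Set.mem_Ici.mp hy2) with hyeq | hy0
          · rw [← hyeq, hv0]
            simp [Real.zero_rpow (by linarith : (2:ℝ) - q ≠ 0)]
          · rw [hvpos y hy0, Real.norm_eq_abs]
            exact smallb y hy0 hy1.le
        · have hcg : ContinuousAt (fun y : ℝ => 2*M1*y + (F*M2) * (y ^ (2-q) / (2-q))) 0 := by
            apply ContinuousAt.add
            · exact (continuous_const.mul continuous_id).continuousAt
            · exact continuousAt_const.mul
                ((Real.continuousAt_rpow_const 0 (2-q) (Or.inr (by linarith))).div_const _)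
          have hg0 : (fun y : ℝ => 2*M1*y + (F*M2) * (y ^ (2-q) / (2-q))) 0 = 0 := by
            simp [Real.zero_rpow (by linarith : (2:ℝ) - q ≠ 0)]
          have ht := hcg.tendsto.mono_left
            (nhdsWithin_le_nhds (s := Ici (0:ℝ)) (a := (0:ℝ)))
          simpa [Real.zero_rpow (show (2:ℝ) - q ≠ 0 by linarith)] using ht
      have key : Filter.Tendsto v (nhdsWithin 0 (Ici (0:ℝ))) (nhds L0) := by
        have := hsq.add (tendsto_const_nhds : Filter.Tendsto (fun _ : ℝ => L0)
          (nhdsWithin 0 (Ici (0:ℝ))) (nhds L0))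
        simpa using this
      show ContinuousWithinAt v (Ici 0) 0
      rw [ContinuousWithinAt, hv0]
      exact key
    · -- 0 < x
      have hca : ContinuousWithinAt u (Ici 0) x := (hu x hx0).continuousAt.continuousWithinAt
      apply hca.congr_of_eventuallyEq
      · apply Filter.Eventually.filter_mono nhdsWithin_le_nhds
        filter_upwards [isOpen_Ioi.mem_nhds hx0] with y hy
        exact hvpos y hy
      · exact hvpos x hx0
  · -- tendsto at infinity
    have t1 : Filter.Tendsto (fun x : ℝ => (x/2) ^ (-q)) Filter.atTop (nhds 0) :=
      (tendsto_rpow_neg_atTop (by linarith : (0:ℝ) < q)).comp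
        (Filter.tendsto_id.atTop_div_const two_pos)
    have t2 : Filter.Tendsto (fun x : ℝ => (x/2) ^ (-(q-1))) Filter.atTop (nhds 0) :=
      (tendsto_rpow_neg_atTop (by linarith : (0:ℝ) < q - 1)).comp
        (Filter.tendsto_id.atTop_div_const two_pos)
    apply squeeze_zero_norm'
      (a := fun x : ℝ => 2 * (x/2) ^ (-q) * M0 + 2 * (x/2) ^ (-(q-1)) * M1)
    · filter_upwards [Filter.eventually_ge_atTop (1:ℝ)] with x hx1
      have hk := key1 (x/2) (by linarith)
      rw [show 2*(x/2) = x by ring, show (1:ℝ)-q = -(q-1) by ring] at hk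
      rw [hvpos x (by linarith), Real.norm_eq_abs]
      exact hk
    · have hlim : Filter.Tendsto
          (fun x : ℝ => 2 * (x/2) ^ (-q) * M0 + 2 * (x/2) ^ (-(q-1)) * M1)
          Filter.atTop (nhds (2*0*M0 + 2*0*M1)) :=
        ((t1.const_mul (2:ℝ)).mul_const M0).add ((t2.const_mul (2:ℝ)).mul_const M1)
      rw [show 2*(0:ℝ)*M0 + 2*0*M1 = 0 by norm_num] at hlim
      exact hlim
  · -- the uniform bound
    intro x hx
    have hDM2 : (F*M2) * (1/(2-q)) = D * M2 := by rw [hDdef]; ring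
    rcases eq_or_lt_of_le (Set.mem_Ici.mp hx) with heq | hx0
    · rw [← heq, hv0]
      rw [hDM2] at hL0b
      nlinarith [mul_nonneg hDpos.le hM0, mul_nonneg hDpos.le hM1, mul_nonneg hDpos.le hM2]
    · rw [hvpos x hx0]
      rcases le_or_gt 1 x with hx1 | hx1
      · have := large x hx1
        nlinarith [mul_nonneg hDpos.le hM0, mul_nonneg hDpos.le hM1, mul_nonneg hDpos.le hM2]
      · have hsm := smallb x hx0 hx1.le
        have hxq1 : x ^ (2-q) ≤ 1 := Real.rpow_le_one hx0.le hx1.le h2mq.le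
        have hdiv : x ^ (2-q) / (2-q) ≤ 1 / (2-q) :=
          (div_le_div_iff_of_pos_right h2mq).2 hxq1
        have hmul : (F*M2) * (x ^ (2-q) / (2-q)) ≤ (F*M2) * (1/(2-q)) :=
          mul_le_mul_of_nonneg_left hdiv (mul_nonneg hFpos.le hM2)
        have habs : |u x| ≤ |u x - L0| + |L0| := by
          calc |u x| = |(u x - L0) + L0| := by ring_nf
            _ ≤ |u x - L0| + |L0| := abs_add_le _ _
        rw [hDM2] at hL0b hmul
        nlinarith [mul_nonneg hDpos.le hM0, mul_nonneg hDpos.le hM1,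
          mul_nonneg hDpos.le hM2, mul_le_mul_of_nonneg_left hx1.le hM1]
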